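/- Let H ∈ C(ℝⁿ) be quasi-convex (every sub-level set {p : H(p) ≤ λ} is convex) with all sub-level sets bounded, and let η > 0 and ε > 0. Assume there exists p₁ = (p*',ρ₁) ∈ ℝ^{n−1}×ℝ with H(p₁) + η ≤ 0, and let ρ₀ := min{ρ ∈ ℝ : H((p*',ρ)) ≤ 0} (this minimum exists and ρ₀ < ρ₁). Set p₀ := (p*',ρ₀), φ₁⁺(x) := max_{p ∈ {H+η ≤ 0}} p·x, φ(x) := (1/(2ε))|x'|² + p₀·x, and ψ(x) := inf_{y'∈ℝ^{n−1}} [ (1/(2ε))|y'|² + p*'·y' + φ₁⁺(x − (y',0)) ]. Then there exists r > 0 such that ψ(x) ≤ φ(x) for all x ∈ B_r∩{xₙ ≤ 0}. -/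

import Mathlib

open Metric Set Filter Topology Bornology
open scoped RealInnerProductSpace
noncomputable section
abbrev Euc (n : ℕ) := EuclideanSpace ℝ (Fin n)
def snocE {n : ℕ} (p : Euc n) (t : ℝ) : Euc (n + 1) :=
  (EuclideanSpace.equiv (Fin (n + 1)) ℝ).symm (Fin.snoc (fun i => p i) t)

def projE {n : ℕ} (x : Euc (n+1)) : Euc n :=
  (EuclideanSpace.equiv (Fin n) ℝ).symm (fun i => x i.castSucc)

@[simp] lemma snocE_castSucc {n : ℕ} (p : Euc n) (t : ℝ) (i : Fin n) :
    snocE p t i.castSucc = p i := by simp [snocE]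

@[simp] lemma snocE_last {n : ℕ} (p : Euc n) (t : ℝ) :
    snocE p t (Fin.last n) = t := by simp [snocE]

@[simp] lemma projE_apply {n : ℕ} (x : Euc (n+1)) (i : Fin n) : projE x i = x i.castSucc := rfl

lemma snocE_proj {n : ℕ} (x : Euc (n+1)) : snocE (projE x) (x (Fin.last n)) = x := by
  ext i
  induction i using Fin.lastCases with
  | last => simp
  | cast i => simp

lemma snocE_add {n : ℕ} (p q : Euc n) (s t : ℝ) :
    snocE p s + snocE q t = snocE (p + q) (s + t) := by
  ext i
  induction i using Fin.lastCases with
  | last => simp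
  | cast i => simp

lemma snocE_smul {n : ℕ} (c : ℝ) (p : Euc n) (t : ℝ) :
    c • snocE p t = snocE (c • p) (c * t) := by
  ext i
  induction i using Fin.lastCases with
  | last => simp
  | cast i => simp [PiLp.smul_apply]

lemma inner_snocE {n : ℕ} (p q : Euc n) (s t : ℝ) :
    ⟪snocE p s, snocE q t⟫ = ⟪p, q⟫ + s * t := by
  simp only [PiLp.inner_apply, RCLike.inner_apply, starRingEnd_apply, star_trivial]
  rw [Fin.sum_univ_castSucc]
  simp
  ring

lemma sum_eq_inner {n : ℕ} (p q : Euc n) : (∑ i, p i * q i) = ⟪p, q⟫ := by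
  simp only [PiLp.inner_apply, RCLike.inner_apply, starRingEnd_apply, star_trivial]
  exact Finset.sum_congr rfl fun i _ => mul_comm _ _

lemma sum_sq_eq_inner {n : ℕ} (p : Euc n) : (∑ i, (p i) ^ 2) = ⟪p, p⟫ := by
  simp only [PiLp.inner_apply, RCLike.inner_apply, starRingEnd_apply, star_trivial, sq]

lemma abs_coord_le_norm {n : ℕ} (x : Euc n) (i : Fin n) : |x i| ≤ ‖x‖ := by
  have h := EuclideanSpace.norm_eq x
  have h1 : (x i)^2 ≤ ∑ j, (x j)^2 := by
    apply Finset.single_le_sum (f := fun j => (x j)^2) (fun j _ => sq_nonneg _) (Finset.mem_univ i)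
  have h2 : |x i| = Real.sqrt ((x i)^2) := (Real.sqrt_sq_eq_abs _).symm
  rw [h2, h]
  exact Real.sqrt_le_sqrt (by simpa [sq_abs] using h1)

lemma continuous_snocE_right {n : ℕ} (p : Euc n) : Continuous fun t : ℝ => snocE p t := by
  have h : (fun t : ℝ => snocE p t) = fun t => snocE p 0 + t • snocE 0 1 := by
    funext t; rw [snocE_smul, snocE_add]; simp
  rw [h]
  exact continuous_const.add (continuous_id.smul continuous_const)

lemma continuous_projE {n : ℕ} : Continuous (projE (n := n)) := by
  refine Continuous.comp (EuclideanSpace.equiv (Fin n) ℝ).symm.continuous ?_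
  exact continuous_pi fun i => (continuous_apply _).comp (EuclideanSpace.equiv (Fin (n+1)) ℝ).continuous

lemma continuous_last {n : ℕ} : Continuous fun x : Euc (n+1) => x (Fin.last n) :=
  (continuous_apply _).comp (EuclideanSpace.equiv (Fin (n+1)) ℝ).continuous

lemma norm_snocE_zero {n : ℕ} (v : Euc n) : ‖snocE v 0‖ = ‖v‖ := by
  have h : ‖snocE v 0‖^2 = ‖v‖^2 := by
    rw [← real_inner_self_eq_norm_sq, ← real_inner_self_eq_norm_sq, inner_snocE]; ring
  nlinarith [norm_nonneg (snocE v 0), norm_nonneg v]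

lemma norm_snocE_zero_left {n : ℕ} (t : ℝ) : ‖snocE (0 : Euc n) t‖ = |t| := by
  have h : ‖snocE (0:Euc n) t‖^2 = t^2 := by
    rw [← real_inner_self_eq_norm_sq, inner_snocE]; simp [sq]
  nlinarith [norm_nonneg (snocE (0:Euc n) t), abs_nonneg t, sq_abs t]

lemma projE_add {n : ℕ} (x y : Euc (n+1)) : projE (x + y) = projE x + projE y := rfl

lemma projE_smul {n : ℕ} (c : ℝ) (x : Euc (n+1)) : projE (c • x) = c • projE x := rfl

lemma projE_sub {n : ℕ} (x y : Euc (n+1)) : projE (x - y) = projE x - projE y := rfl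

lemma inner_snocE_right {n : ℕ} (p : Euc (n+1)) (v : Euc n) (t : ℝ) :
    ⟪p, snocE v t⟫ = ⟪projE p, v⟫ + p (Fin.last n) * t := by
  conv_lhs => rw [← snocE_proj p]
  rw [inner_snocE]

set_option maxHeartbeats 1000000 in
theorem statement_18 {n : ℕ} (H : Euc (n + 1) → ℝ) (hHC : Continuous H)
    (hqc : ∀ c : ℝ, Convex ℝ {p : Euc (n + 1) | H p ≤ c})
    (hbdd : ∀ c : ℝ, Bornology.IsBounded {p : Euc (n + 1) | H p ≤ c})
    (η ε : ℝ) (hη : 0 < η) (hε : 0 < ε)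
    (pstar : Euc n) (ρ₁ : ℝ) (hp₁ : H (snocE pstar ρ₁) + η ≤ 0) :
    ∃ ρ₀ : ℝ, IsLeast {ρ : ℝ | H (snocE pstar ρ) ≤ 0} ρ₀ ∧ ρ₀ < ρ₁ ∧
      ∃ r : ℝ, 0 < r ∧ ∀ x ∈ ball (0 : Euc (n + 1)) r, x (Fin.last n) ≤ 0 →
        sInf {t : ℝ | ∃ y' : Euc n,
            t = (1 / (2 * ε)) * (∑ i, (y' i) ^ 2) + (∑ i, pstar i * y' i) +
              sSup ((fun p : Euc (n + 1) => ∑ i, p i * (x - snocE y' 0) i) ''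
                {p | H p + η ≤ 0})} ≤
          (1 / (2 * ε)) * (∑ i : Fin n, (x i.castSucc) ^ 2) +
            ∑ i, snocE pstar ρ₀ i * x i := by
  classical
  have hgC : Continuous fun ρ : ℝ => H (snocE pstar ρ) := hHC.comp (continuous_snocE_right pstar)
  set S : Set ℝ := {ρ : ℝ | H (snocE pstar ρ) ≤ 0} with hSdef
  have hρ₁S : ρ₁ ∈ S := by simp only [hSdef, mem_setOf_eq]; linarith
  have hSne : S.Nonempty := ⟨ρ₁, hρ₁S⟩
  have hScl : IsClosed S := isClosed_le hgC continuous_const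
  have hSbdd : BddBelow S := by
    obtain ⟨M, hM⟩ := (hbdd 0).subset_closedBall 0
    refine ⟨-M, fun ρ hρ => ?_⟩
    have h1 : snocE pstar ρ ∈ closedBall (0 : Euc (n+1)) M := hM hρ
    have h2 : |ρ| ≤ ‖snocE pstar ρ‖ := by
      simpa using abs_coord_le_norm (snocE pstar ρ) (Fin.last n)
    rw [mem_closedBall, dist_zero_right] at h1
    have := abs_le.1 (h2.trans h1)
    linarith [this.1]
  set ρ₀ := sInf S with hρ₀def
  have hleast : IsLeast S ρ₀ := ⟨hScl.csInf_mem hSne hSbdd, fun b hb => csInf_le hSbdd hb⟩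
  have hρ₀S : ρ₀ ∈ S := hleast.1
  -- ρ₀ < ρ₁
  have hρ₀lt : ρ₀ < ρ₁ := by
    have hV : IsOpen {ρ : ℝ | H (snocE pstar ρ) < 0} := isOpen_lt hgC continuous_const
    have hρ₁V : ρ₁ ∈ {ρ : ℝ | H (snocE pstar ρ) < 0} := by
      simp only [mem_setOf_eq]; linarith
    obtain ⟨δ', hδ', hball⟩ := Metric.isOpen_iff.1 hV ρ₁ hρ₁V
    have hmem : ρ₁ - δ'/2 ∈ S := by
      have : ρ₁ - δ'/2 ∈ ball ρ₁ δ' := by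
        rw [mem_ball, Real.dist_eq]
        rw [abs_of_nonpos (by linarith)]
        linarith
      have h3 : H (snocE pstar (ρ₁ - δ'/2)) < 0 := hball this
      exact le_of_lt h3
    have := hleast.2 hmem
    linarith
  refine ⟨ρ₀, hleast, hρ₀lt, ?_⟩
  -- the compact convex set K
  set K : Set (Euc (n+1)) := {p | H p + η ≤ 0} with hKdef
  have hKsub : ∀ p ∈ K, H p ≤ -η := fun p hp => by
    simp only [hKdef, mem_setOf_eq] at hp; linarith
  have hp₁K : snocE pstar ρ₁ ∈ K := hp₁
  have hKne : K.Nonempty := ⟨_, hp₁K⟩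
  have hKcl : IsClosed K := isClosed_le (hHC.add continuous_const) continuous_const
  have hKbd : IsBounded K := (hbdd (-η)).subset (fun p hp => by
    simp only [mem_setOf_eq]; exact hKsub p hp)
  have hKcp : IsCompact K := Metric.isCompact_of_isClosed_isBounded hKcl hKbd
  have hKcvx : Convex ℝ K := by
    have : K = {p : Euc (n+1) | H p ≤ -η} := by
      ext p; simp only [hKdef, mem_setOf_eq]; constructor <;> intro <;> linarith
    rw [this]; exact hqc (-η)
  -- δ-thickening of K inside {H ≤ 0}
  have hUopen : IsOpen {p : Euc (n+1) | H p < 0} := isOpen_lt hHC continuous_const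
  have hKU : K ⊆ {p : Euc (n+1) | H p < 0} := fun p hp => by
    simp only [mem_setOf_eq]; linarith [hKsub p hp]
  obtain ⟨δ, hδpos, hthick⟩ := hKcp.exists_cthickening_subset_open hUopen hKU
  have hKδ : ∀ p ∈ K, ∀ v : Euc (n+1), ‖v‖ ≤ δ → H (p + v) ≤ 0 := by
    intro p hp v hv
    have hmem : p + v ∈ cthickening δ K := by
      apply mem_cthickening_of_dist_le (p + v) p δ K hp
      simpa [dist_eq_norm] using hv
    exact le_of_lt (hthick hmem)
  have hconv0 : Convex ℝ {p : Euc (n+1) | H p ≤ 0} := hqc 0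
  -- the cone bound
  set C := (ρ₁ - ρ₀) / δ with hCdef
  have hCpos : 0 < C := div_pos (by linarith) hδpos
  have cone : ∀ p ∈ K, ρ₀ + δ - C * ‖projE p - pstar‖ ≤ p (Fin.last n) := by
    intro p hp
    set a := ‖projE p - pstar‖ with hadef
    have ha0 : 0 ≤ a := norm_nonneg _
    -- the lowered point
    have hz : H (snocE (projE p) (p (Fin.last n) - δ)) ≤ 0 := by
      have h := hKδ p hp (snocE 0 (-δ)) (by
        rw [norm_snocE_zero_left, abs_of_nonpos (by linarith)]; linarith)
      have heq : p + snocE 0 (-δ) = snocE (projE p) (p (Fin.last n) - δ) := by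
        conv_lhs => rw [← snocE_proj p]
        rw [snocE_add]; simp; ring_nf
      rwa [heq] at h
    rcases eq_or_lt_of_le ha0 with ha | ha
    · -- a = 0 : projE p = pstar
      have hpp : projE p - pstar = 0 := by
        rw [← norm_eq_zero]; exact ha.symm
      have hpp' : projE p = pstar := by
        have := sub_eq_zero.mp hpp; exact this
      rw [hpp'] at hz
      have : p (Fin.last n) - δ ∈ S := hz
      have := hleast.2 this
      rw [← ha]
      linarith
    · -- a > 0
      set t := a / (a + δ) with htdef
      have hadpos : 0 < a + δ := by linarith
      have ht0 : 0 ≤ t := le_of_lt (div_pos ha hadpos)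
      have h1t : 1 - t = δ / (a + δ) := by rw [htdef]; field_simp; ring
      have hq : H (snocE (pstar - (δ/a) • (projE p - pstar)) ρ₁) ≤ 0 := by
        have hw : ‖snocE (-((δ/a) • (projE p - pstar))) (0:ℝ)‖ ≤ δ := by
          rw [norm_snocE_zero, norm_neg, norm_smul, Real.norm_eq_abs,
            abs_of_nonneg (le_of_lt (div_pos hδpos ha)), ← hadef]
          rw [div_mul_cancel₀ _ (ne_of_gt ha)]
        have h := hKδ _ hp₁K _ hw
        have heq : snocE pstar ρ₁ + snocE (-((δ/a) • (projE p - pstar))) 0 =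
            snocE (pstar - (δ/a) • (projE p - pstar)) ρ₁ := by
          rw [snocE_add, add_zero, ← sub_eq_add_neg]
        rwa [heq] at h
      have hcomb := hconv0 hz hq (show (0:ℝ) ≤ 1 - t by
        rw [htdef]
        have h7 : a/(a+δ) ≤ 1 := by rw [div_le_one hadpos]; linarith
        linarith) ht0 (by ring)
      have heq2 : (1-t) • snocE (projE p) (p (Fin.last n) - δ) +
          t • snocE (pstar - (δ/a) • (projE p - pstar)) ρ₁ =
          snocE pstar ((1-t)*(p (Fin.last n) - δ) + t*ρ₁) := by
        have hane : a ≠ 0 := ne_of_gt ha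
        have hadne : a + δ ≠ 0 := ne_of_gt hadpos
        ext i
        induction i using Fin.lastCases with
        | last => simp
        | cast i =>
          simp only [PiLp.add_apply, PiLp.smul_apply, PiLp.sub_apply, snocE_castSucc,
            smul_eq_mul, htdef, projE_apply]
          field_simp
          ring
      rw [heq2] at hcomb
      have hge := hleast.2 hcomb
      rw [h1t, htdef] at hge
      have h5 : ρ₀ * (a + δ) ≤ δ*(p (Fin.last n) - δ) + a*ρ₁ := by
        have h6 := mul_le_mul_of_nonneg_right hge (le_of_lt hadpos)
        calc ρ₀ * (a+δ) ≤ (δ / (a + δ) * (p (Fin.last n) - δ) + a / (a + δ) * ρ₁) * (a+δ) := h6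
        _ = δ*(p (Fin.last n) - δ) + a*ρ₁ := by field_simp
      rw [hCdef]
      have hgoal : (ρ₀ + δ - (ρ₁ - ρ₀)/δ * a) * δ ≤ p (Fin.last n) * δ := by
        have hcc : (ρ₁ - ρ₀)/δ * a * δ = (ρ₁ - ρ₀) * a := by
          field_simp
        nlinarith [h5]
      exact le_of_mul_le_mul_right hgoal hδpos
  -- choose r
  have hr1 : 0 < ε*δ/(4*C) := by positivity
  have hr2 : 0 < ε*δ/(4*C^2) := by positivity
  refine ⟨min (ε*δ/(4*C)) (ε*δ/(4*C^2)), lt_min hr1 hr2, ?_⟩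
  intro x hx hxn
  set x' := projE x with hx'def
  set xn := x (Fin.last n) with hxndef
  have hxx : snocE x' xn = x := snocE_proj x
  have hxnorm : ‖x‖ < min (ε*δ/(4*C)) (ε*δ/(4*C^2)) := by rwa [mem_ball, dist_zero_right] at hx
  have hsplit : ‖x‖^2 = ‖x'‖^2 + xn^2 := by
    conv_lhs => rw [← hxx]
    rw [← real_inner_self_eq_norm_sq, inner_snocE, real_inner_self_eq_norm_sq]; ring
  have hx'le : ‖x'‖ ≤ ‖x‖ := by nlinarith [sq_nonneg xn, norm_nonneg x, norm_nonneg x']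
  have hxnle : -xn ≤ ‖x‖ := by
    have h := abs_coord_le_norm x (Fin.last n)
    rw [← hxndef] at h
    cases abs_cases xn with
    | inl h2 => linarith [h2.1 ▸ h, norm_nonneg x]
    | inr h2 => linarith [h2.1 ▸ h]
  have hx'r1 : ‖x'‖ ≤ ε*δ/(4*C) := le_of_lt (lt_of_le_of_lt hx'le (lt_of_lt_of_le hxnorm (min_le_left _ _)))
  have hxnr2 : -xn ≤ ε*δ/(4*C^2) := le_of_lt (lt_of_le_of_lt hxnle (lt_of_lt_of_le hxnorm (min_le_right _ _)))
  set φx := (1/(2*ε)) * ‖x'‖^2 + ⟪pstar, x'⟫ + ρ₀ * xn with hφdef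
  set G : Euc (n+1) → ℝ := fun p => ⟪p, x⟫ - (ε/2) * ‖projE p - pstar‖^2 with hGdef
  have hGcont : Continuous G := by
    apply Continuous.sub
    · exact continuous_id.inner continuous_const
    · exact continuous_const.mul (((continuous_projE.sub continuous_const).norm).pow 2)
  -- the pointwise bound G p ≤ φx on K
  have hGle : ∀ p ∈ K, G p ≤ φx := by
    intro p hp
    have hiv : ⟪p, x⟫ = ⟪projE p - pstar, x'⟫ + ⟪pstar, x'⟫ + p (Fin.last n) * xn := by
      conv_lhs => rw [← hxx]
      rw [inner_snocE_right, inner_sub_left]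
      ring
    have hCS : ⟪projE p - pstar, x'⟫ ≤ ‖projE p - pstar‖ * ‖x'‖ := real_inner_le_norm _ _
    have hcone := cone p hp
    set a := ‖projE p - pstar‖ with hadef
    have ha0 : 0 ≤ a := norm_nonneg _
    simp only [hGdef]
    rw [hiv, hφdef, ← hadef]
    rcases le_or_gt ρ₀ (p (Fin.last n)) with hcase | hcase
    · have h1 : p (Fin.last n) * xn ≤ ρ₀ * xn := by nlinarith
      have h2 : ⟪projE p - pstar, x'⟫ ≤ (ε/2)*a^2 + (1/(2*ε))*‖x'‖^2 := by
        have hsq : 0 ≤ (ε*a - ‖x'‖)^2 := sq_nonneg _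
        have key : a * ‖x'‖ ≤ (ε/2)*a^2 + (1/(2*ε))*‖x'‖^2 := by
          have h := div_nonneg hsq (le_of_lt (by linarith : (0:ℝ) < 2*ε))
          have heq : (ε*a - ‖x'‖)^2 / (2*ε) = (ε/2)*a^2 + (1/(2*ε))*‖x'‖^2 - a*‖x'‖ := by
            field_simp
            ring
          linarith [heq ▸ h]
        linarith [hCS]
      linarith
    · have hCa : δ ≤ C * a := by nlinarith
      have haδ : ε*δ/(4*C) ≤ (ε/4)*a := by
        rw [div_le_iff₀ (by positivity : (0:ℝ) < 4*C)]
        nlinarith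
      have hstep : a * (ε*δ/(4*C)) ≤ (ε/4)*a^2 := by nlinarith [mul_le_mul_of_nonneg_left haδ ha0]
      have h1 : ⟪projE p - pstar, x'⟫ ≤ (ε/4)*a^2 := by
        have : a * ‖x'‖ ≤ a * (ε*δ/(4*C)) := mul_le_mul_of_nonneg_left hx'r1 ha0
        linarith [hCS]
      have h2 : (ρ₀ - p (Fin.last n)) * (-xn) ≤ (ε/4)*a^2 := by
        have e1 : (ρ₀ - p (Fin.last n)) * (-xn) ≤ (C*a) * (-xn) :=
          mul_le_mul_of_nonneg_right (by linarith) (by linarith)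
        have e2 : (C*a) * (-xn) ≤ (C*a) * (ε*δ/(4*C^2)) :=
          mul_le_mul_of_nonneg_left hxnr2 (by positivity)
        have e3 : (C*a) * (ε*δ/(4*C^2)) = a * (ε*δ/(4*C)) := by
          field_simp
        linarith [hstep]
      have h3 : 0 ≤ (1/(2*ε))*‖x'‖^2 := by positivity
      nlinarith [h1, h2, h3]
  -- maximizer of G on K
  obtain ⟨phat, hphatK, hmax⟩ := hKcp.exists_isMaxOn hKne hGcont.continuousOn
  rw [isMaxOn_iff] at hmax
  set qhat := projE phat - pstar with hqhatdef
  set y0 := ε • qhat with hy0def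
  set L : Euc (n+1) → ℝ := fun p => ⟪p - phat, x⟫ - ε * ⟪qhat, projE (p - phat)⟫ with hLdef
  have hL : ∀ p ∈ K, L p ≤ 0 := by
    intro p hp
    set B := (ε/2) * ‖projE (p - phat)‖^2 with hBdef
    have hB0 : 0 ≤ B := by positivity
    have key : ∀ t : ℝ, 0 ≤ t → t ≤ 1 → t * L p ≤ t^2 * B := by
      intro t ht0 ht1
      have hmem : phat + t • (p - phat) ∈ K := by
        have heq : phat + t • (p - phat) = (1-t) • phat + t • p := by module
        rw [heq]; exact hKcvx hphatK hp (by linarith) ht0 (by ring)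
      have hGle2 := hmax _ hmem
      have hproj : projE (phat + t • (p - phat)) - pstar = qhat + t • projE (p - phat) := by
        rw [projE_add, projE_smul, hqhatdef]; abel
      have hid : G (phat + t • (p - phat)) = G phat + t * L p - t^2 * B := by
        simp only [hGdef, hLdef, hBdef]
        rw [hproj, inner_add_left, real_inner_smul_left, norm_add_sq_real,
          real_inner_smul_right, norm_smul, Real.norm_eq_abs, mul_pow, sq_abs]
        ring
      rw [hid] at hGle2; linarith
    by_contra hpos
    push_neg at hpos
    rcases eq_or_lt_of_le hB0 with hB | hB
    · have h := key 1 zero_le_one le_rfl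
      rw [← hB] at h; simp at h; linarith
    · have hden : 0 < L p + 2*B := by linarith
      set t := min 1 (L p / (L p + 2*B)) with htdef
      have ht0 : 0 < t := lt_min one_pos (div_pos hpos hden)
      have ht1 : t ≤ 1 := min_le_left _ _
      have hk := key t (le_of_lt ht0) ht1
      have h1 : L p ≤ t * B := by
        have h2' : t * L p ≤ t * (t*B) := by calc t * L p ≤ t^2*B := hk
                                               _ = t*(t*B) := by ring
        exact le_of_mul_le_mul_left h2' ht0
      have h2 : t * (L p + 2*B) ≤ L p := by
        have hmr := min_le_right 1 (L p / (L p + 2*B))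
        calc t * (L p + 2*B) ≤ (L p / (L p + 2*B)) * (L p + 2*B) :=
              mul_le_mul_of_nonneg_right hmr (le_of_lt hden)
          _ = L p := by field_simp
      have h3 : 0 < t * L p := mul_pos ht0 hpos
      nlinarith [h1, h2, h3, mul_le_mul_of_nonneg_left h1 (le_of_lt ht0)]
  -- key bound with the special y0
  have hFle : ∀ p ∈ K, (1/(2*ε)) * ⟪y0, y0⟫ + ⟪pstar, y0⟫ + ⟪p, x - snocE y0 0⟫ ≤ φx := by
    intro p hp
    have e1 : ⟪y0, y0⟫ = ε^2 * ⟪qhat, qhat⟫ := by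
      rw [hy0def, real_inner_smul_left, real_inner_smul_right]; ring
    have e2 : ⟪pstar, y0⟫ = ε * ⟪qhat, pstar⟫ := by
      rw [hy0def, real_inner_smul_right, real_inner_comm]
    have e3 : ⟪p, x - snocE y0 0⟫ = ⟪p, x⟫ - ε * ⟪qhat, projE p⟫ := by
      rw [inner_sub_right, inner_snocE_right, hy0def, real_inner_smul_right, mul_zero, add_zero,
        real_inner_comm (projE p) qhat]
    have e4 : G phat = ⟪phat, x⟫ - (ε/2) * ⟪qhat, qhat⟫ := by
      simp only [hGdef]
      rw [← hqhatdef, real_inner_self_eq_norm_sq]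
    have e5 : L p = ⟪p, x⟫ - ⟪phat, x⟫ - ε*⟪qhat, projE p⟫ + ε*⟪qhat, projE phat⟫ := by
      simp only [hLdef]
      rw [inner_sub_left, projE_sub, inner_sub_right]; ring
    have e6 : ⟪qhat, projE phat⟫ = ⟪qhat, qhat⟫ + ⟪qhat, pstar⟫ := by
      have hpe : projE phat = qhat + pstar := by rw [hqhatdef]; abel
      rw [hpe, inner_add_right]
    have hident : (1/(2*ε)) * ⟪y0, y0⟫ + ⟪pstar, y0⟫ + ⟪p, x - snocE y0 0⟫ = G phat + L p := by
      rw [e1, e2, e3, e4, e5, e6]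
      field_simp
      ring
    rw [hident]
    linarith [hL p hp, hGle phat hphatK]
  -- final assembly
  have himgne : ∀ y' : Euc n, ((fun p : Euc (n+1) => ∑ i, p i * (x - snocE y' 0) i) '' K).Nonempty :=
    fun y' => hKne.image _
  have himgbdd : ∀ y' : Euc n,
      BddAbove ((fun p : Euc (n+1) => ∑ i, p i * (x - snocE y' 0) i) '' K) := by
    intro y'
    have hfe : (fun p : Euc (n+1) => ∑ i, p i * (x - snocE y' 0) i) =
        fun p : Euc (n+1) => ⟪p, x - snocE y' 0⟫ := funext fun p => sum_eq_inner p _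
    rw [hfe]
    exact (hKcp.image (continuous_id.inner continuous_const)).bddAbove
  have hprojp1 : projE (snocE pstar ρ₁) = pstar := by
    ext i; simp
  have hTbdd : BddBelow {t : ℝ | ∃ y' : Euc n,
      t = (1 / (2 * ε)) * (∑ i, (y' i) ^ 2) + (∑ i, pstar i * y' i) +
        sSup ((fun p : Euc (n + 1) => ∑ i, p i * (x - snocE y' 0) i) '' K)} := by
    refine ⟨⟪snocE pstar ρ₁, x⟫, fun tt htt => ?_⟩
    obtain ⟨y', rfl⟩ := htt
    have hle : (∑ i, snocE pstar ρ₁ i * (x - snocE y' 0) i) ≤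
        sSup ((fun p : Euc (n + 1) => ∑ i, p i * (x - snocE y' 0) i) '' K) :=
      le_csSup (himgbdd y') ⟨snocE pstar ρ₁, hp₁K, rfl⟩
    have hval : (∑ i, snocE pstar ρ₁ i * (x - snocE y' 0) i) =
        ⟪snocE pstar ρ₁, x⟫ - (∑ i, pstar i * y' i) := by
      rw [sum_eq_inner, inner_sub_right, inner_snocE_right (snocE pstar ρ₁) y' 0, hprojp1,
        snocE_last, sum_eq_inner]
      ring
    rw [hval] at hle
    have hsq0 : 0 ≤ (1/(2*ε)) * (∑ i, (y' i)^2) := by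
      rw [sum_sq_eq_inner]
      exact mul_nonneg (by positivity) real_inner_self_nonneg
    linarith
  have hmem : ((1 / (2 * ε)) * (∑ i, (y0 i) ^ 2) + (∑ i, pstar i * y0 i) +
      sSup ((fun p : Euc (n + 1) => ∑ i, p i * (x - snocE y0 0) i) '' K)) ∈
      {t : ℝ | ∃ y' : Euc n,
        t = (1 / (2 * ε)) * (∑ i, (y' i) ^ 2) + (∑ i, pstar i * y' i) +
          sSup ((fun p : Euc (n + 1) => ∑ i, p i * (x - snocE y' 0) i) '' K)} := ⟨y0, rfl⟩
  have hsup_le : sSup ((fun p : Euc (n + 1) => ∑ i, p i * (x - snocE y0 0) i) '' K) ≤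
      φx - ((1 / (2 * ε)) * (∑ i, (y0 i) ^ 2) + (∑ i, pstar i * y0 i)) := by
    apply csSup_le (himgne y0)
    rintro b ⟨p, hp, rfl⟩
    show (∑ i, p i * (x - snocE y0 0) i) ≤ _
    have hF := hFle p hp
    have c1 : (∑ i, (y0 i)^2) = ⟪y0, y0⟫ := sum_sq_eq_inner y0
    have c2 : (∑ i, pstar i * y0 i) = ⟪pstar, y0⟫ := sum_eq_inner _ _
    have c3 : (∑ i, p i * (x - snocE y0 0) i) = ⟪p, x - snocE y0 0⟫ := sum_eq_inner _ _
    rw [c1, c2, c3]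
    linarith
  have hRHS : (1 / (2 * ε)) * (∑ i : Fin n, (x i.castSucc) ^ 2) +
      (∑ i, snocE pstar ρ₀ i * x i) = φx := by
    have c4 : (∑ i : Fin n, (x i.castSucc)^2) = ‖x'‖^2 := by
      rw [← real_inner_self_eq_norm_sq, ← sum_sq_eq_inner]
      apply Finset.sum_congr rfl
      intro i _
      rw [hx'def, projE_apply]
    have c5 : (∑ i, snocE pstar ρ₀ i * x i) = ⟪pstar, x'⟫ + ρ₀ * xn := by
      rw [sum_eq_inner]
      conv_lhs => rw [← hxx]
      rw [inner_snocE]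
    rw [c4, c5, hφdef]
    ring
  have hfinal : ((1 / (2 * ε)) * (∑ i, (y0 i) ^ 2) + (∑ i, pstar i * y0 i) +
      sSup ((fun p : Euc (n + 1) => ∑ i, p i * (x - snocE y0 0) i) '' K)) ≤
      (1 / (2 * ε)) * (∑ i : Fin n, (x i.castSucc) ^ 2) + ∑ i, snocE pstar ρ₀ i * x i := by
    rw [hRHS]
    linarith
  exact le_trans (csInf_le hTbdd hmem) hfinal
end
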